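/- Let G be a graph with n >= 3 vertices and m edges, and H_G the associated hypergraph. Any ordering of V(H_G) that places all three vertices of B in positions n+1, n+2, n+3 (after all of A) has total cost strictly less than 6*(2^n - 1 - C(n,2) + m), the cost of the ordering that places B first. -/

import Mathlib

open Finset

/-- Position at which hyperedge `e` is first hit by the ordering `σ`. -/
noncomputable def firstHit {α : Type*} (σ : α → ℕ) (e : Finset α) : ℕ :=
  sInf (σ '' ↑e)

/-- Total cost of an ordering: each edge pays the position of its first vertex. -/
noncomputable def totalCost {α : Type*} (E : Finset (Finset α)) (σ : α → ℕ) : ℕ :=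
  ∑ e ∈ E, firstHit σ e

open scoped Classical in
/-- Effective coverage of position `i`: the number of edges first hit at `i`. -/
noncomputable def coverage {α : Type*} (E : Finset (Finset α)) (σ : α → ℕ) (i : ℕ) : ℕ :=
  (E.filter fun e => firstHit σ e = i).card

/-- An ordering of the vertex set `V`: a bijection onto positions `{1, ..., |V|}`. -/
def IsOrdering {α : Type*} (V : Finset α) (σ : α → ℕ) : Prop :=
  Set.BijOn σ ↑V (Set.Icc 1 V.card)


/-- The edge set of the hypergraph `H_G` associated with a graph `G` on `Fin n`:
vertices are `A ∪ B` with `A = V(G)` (embedded by `Sum.inl`) and `B = {b₁, b₂, b₃}`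
(embedded by `Sum.inr`); edges are `{vᵢ, b_k}`, `{vᵢ, vⱼ, b_k}` for `vᵢvⱼ ∈ E(G)`,
and `X ∪ {b_k}` for `X ⊆ A` with `|X| ≥ 3`. -/
def IsHG {n : ℕ} (G : SimpleGraph (Fin n)) (E : Finset (Finset (Fin n ⊕ Fin 3))) : Prop :=
  ∀ e : Finset (Fin n ⊕ Fin 3),
    e ∈ E ↔
      (∃ (i : Fin n) (k : Fin 3), e = {Sum.inl i, Sum.inr k}) ∨
      (∃ (i j : Fin n) (k : Fin 3), G.Adj i j ∧ e = {Sum.inl i, Sum.inl j, Sum.inr k}) ∨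
      (∃ X : Finset (Fin n), 3 ≤ X.card ∧ ∃ k : Fin 3, e = X.image Sum.inl ∪ {Sum.inr k})

/-- In `H_G` (with `|V(G)| = n ≥ 3` and `|E(G)| = m`), any ordering placing all three
vertices of `B` in positions `n+1, n+2, n+3` (after all of `A`) has total cost strictly
less than `6 (2ⁿ - 1 - C(n,2) + m)`, the cost of the ordering placing `B` first. -/

lemma choose_two_add_one_le (n : ℕ) (hn : 2 ≤ n) : n.choose 2 + 1 ≤ 2 ^ n := by
  have h : ∑ i ∈ ({0, 2} : Finset ℕ), n.choose i ≤ ∑ i ∈ Finset.range (n+1), n.choose i := by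
    apply Finset.sum_le_sum_of_subset
    intro x hx
    simp only [Finset.mem_insert, Finset.mem_singleton] at hx
    rcases hx with rfl | rfl <;> simp [Finset.mem_range] <;> omega
  rw [Nat.sum_range_choose, Finset.sum_pair (by norm_num : (0:ℕ) ≠ 2)] at h
  simp [Nat.choose_zero_right] at h
  omega

lemma mval_le {n : ℕ} {τ : Fin n → ℕ} {S : Finset (Fin n)} {v : Fin n} (hv : v ∈ S) :
    sInf (τ '' ↑S) ≤ τ v := Nat.sInf_le ⟨v, hv, rfl⟩

lemma mval_mem {n : ℕ} {τ : Fin n → ℕ} {S : Finset (Fin n)} (hS : S.Nonempty) :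
    sInf (τ '' ↑S) ∈ τ '' ↑S := Nat.sInf_mem (hS.elim fun v hv => ⟨τ v, v, hv, rfl⟩)

lemma le_mval {n : ℕ} {τ : Fin n → ℕ} {S : Finset (Fin n)} (hS : S.Nonempty) {i : ℕ}
    (h : ∀ v ∈ S, i ≤ τ v) : i ≤ sInf (τ '' ↑S) := by
  obtain ⟨v, hv, heq⟩ := mval_mem (τ := τ) hS
  rw [← heq]; exact h v hv

lemma le_mval' {n : ℕ} {τ : Fin n → ℕ} {S : Finset (Fin n)} (hS : S.Nonempty) {i : ℕ}
    (h : ∀ v ∈ S, i ≤ τ v) : i ≤ sInf (τ '' ↑S) := by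
  obtain ⟨v, hv, heq⟩ := Nat.sInf_mem (hS.elim fun v hv => (⟨τ v, v, hv, rfl⟩ : (τ '' ↑S).Nonempty))
  rw [← heq]; exact h v hv

lemma sum_two_pow (n : ℕ) : ∑ j ∈ Finset.range n, 2^j = 2^n - 1 := by
  induction n with
  | zero => simp
  | succ k ih => rw [Finset.sum_range_succ, ih, pow_succ]; have := Nat.one_le_two_pow (n := k); omega

lemma sum_two_pow_pred (n : ℕ) :
    ∑ j ∈ Finset.range n, (2 ^ (j + 1) - 1) = (∑ j ∈ Finset.range n, 2 ^ (j+1)) - n := by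
  induction n with
  | zero => simp
  | succ k ih =>
    rw [Finset.sum_range_succ, Finset.sum_range_succ, ih]
    have h1 : ∀ j : ℕ, (1:ℕ) ≤ 2 ^ (j+1) := fun j => Nat.one_le_two_pow
    have h2 : k ≤ ∑ j ∈ Finset.range k, 2 ^ (j+1) := by
      calc k = ∑ _j ∈ Finset.range k, 1 := by simp
      _ ≤ _ := Finset.sum_le_sum (fun j _ => h1 j)
    have := h1 k; omega

lemma card_powerset_nonempty {α : Type*} [DecidableEq α] (s : Finset α) :
    (s.powerset.filter (fun t => t.Nonempty)).card = 2 ^ s.card - 1 := by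
  classical
  have h := Finset.card_filter_add_card_filter_not
    (s := s.powerset) (p := fun t => t.Nonempty)
  have h2 : s.powerset.filter (fun t => ¬ t.Nonempty) = {∅} := by
    ext t
    simp [Finset.not_nonempty_iff_eq_empty]
    rintro rfl; exact Finset.empty_subset _
  rw [h2] at h
  simp [Finset.card_powerset] at h
  omega

lemma sum_min_powerset {n : ℕ} (τ : Fin n → ℕ) (hinj : Function.Injective τ)
    (himg : Finset.univ.image τ = Finset.Icc 1 n) :
    (∑ S ∈ univ.powerset.filter (fun S : Finset (Fin n) => S.Nonempty), sInf (τ '' ↑S)) + n + 2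
      = 2 ^ (n+1) := by
  classical
  have hτmem : ∀ v, τ v ∈ Finset.Icc 1 n := by
    intro v; rw [← himg]; exact Finset.mem_image_of_mem τ (Finset.mem_univ v)
  have step1 : ∀ S : Finset (Fin n), S.Nonempty →
      sInf (τ '' ↑S) = ((Finset.Icc 1 n).filter (fun i => ∀ v ∈ S, i ≤ τ v)).card := by
    intro S hS
    have hmem := Nat.sInf_mem (hS.elim fun v hv => (⟨τ v, v, hv, rfl⟩ : (τ '' ↑S).Nonempty))
    obtain ⟨v₀, hv₀, heq⟩ := hmem
    have h1 : 1 ≤ sInf (τ '' ↑S) := by rw [← heq]; exact (Finset.mem_Icc.1 (hτmem v₀)).1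
    have h2 : sInf (τ '' ↑S) ≤ n := by rw [← heq]; exact (Finset.mem_Icc.1 (hτmem v₀)).2
    have hfe : (Finset.Icc 1 n).filter (fun i => ∀ v ∈ S, i ≤ τ v)
        = Finset.Icc 1 (sInf (τ '' ↑S)) := by
      ext j
      simp only [Finset.mem_filter, Finset.mem_Icc]
      constructor
      · rintro ⟨⟨hj1, hjn⟩, hall⟩
        exact ⟨hj1, le_mval' hS hall⟩
      · rintro ⟨hj1, hjm⟩
        refine ⟨⟨hj1, hjm.trans h2⟩, fun v hv => hjm.trans (Nat.sInf_le ⟨v, hv, rfl⟩)⟩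
    rw [hfe, Nat.card_Icc]; omega
  rw [Finset.sum_congr rfl (fun S hS => step1 S (Finset.mem_filter.1 hS).2)]
  have step2 : (∑ S ∈ univ.powerset.filter (fun S : Finset (Fin n) => S.Nonempty),
        ((Finset.Icc 1 n).filter (fun i => ∀ v ∈ S, i ≤ τ v)).card)
      = ∑ i ∈ Finset.Icc 1 n,
        ((univ.powerset.filter (fun S : Finset (Fin n) => S.Nonempty)).filter
          (fun S => ∀ v ∈ S, i ≤ τ v)).card := by
    simp only [Finset.card_filter]
    exact Finset.sum_comm
  rw [step2]
  have step3 : ∀ i ∈ Finset.Icc 1 n,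
      ((univ.powerset.filter (fun S : Finset (Fin n) => S.Nonempty)).filter
          (fun S => ∀ v ∈ S, i ≤ τ v)).card = 2 ^ (n + 1 - i) - 1 := by
    intro i hi
    obtain ⟨hi1, hin⟩ := Finset.mem_Icc.1 hi
    set V : Finset (Fin n) := univ.filter (fun v => i ≤ τ v) with hV
    have hVcard : V.card = n + 1 - i := by
      have himage : V.image τ = Finset.Icc i n := by
        ext j
        simp only [hV, Finset.mem_image, Finset.mem_filter, Finset.mem_univ, true_and,
          Finset.mem_Icc]
        constructor
        · rintro ⟨v, hle, rfl⟩
          exact ⟨hle, (Finset.mem_Icc.1 (hτmem v)).2⟩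
        · rintro ⟨hij, hjn⟩
          have : j ∈ Finset.univ.image τ := by
            rw [himg, Finset.mem_Icc]; exact ⟨le_trans hi1 hij, hjn⟩
          obtain ⟨v, -, rfl⟩ := Finset.mem_image.1 this
          exact ⟨v, hij, rfl⟩
      have hc := Finset.card_image_of_injective V hinj
      rw [himage, Nat.card_Icc] at hc
      omega
    have hset : (univ.powerset.filter (fun S : Finset (Fin n) => S.Nonempty)).filter
          (fun S => ∀ v ∈ S, i ≤ τ v) = V.powerset.filter (fun t => t.Nonempty) := by
      ext S
      simp only [Finset.mem_filter, Finset.mem_powerset, hV]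
      constructor
      · rintro ⟨⟨-, hne⟩, hall⟩
        exact ⟨fun v hv => Finset.mem_filter.2 ⟨Finset.mem_univ v, hall v hv⟩, hne⟩
      · rintro ⟨hsub, hne⟩
        exact ⟨⟨Finset.subset_univ S, hne⟩, fun v hv => (Finset.mem_filter.1 (hsub hv)).2⟩
    rw [hset, card_powerset_nonempty, hVcard]
  rw [Finset.sum_congr rfl step3]
  have hre : ∑ i ∈ Finset.Icc 1 n, (2 ^ (n + 1 - i) - 1)
      = ∑ j ∈ Finset.range n, (2 ^ (j + 1) - 1) := by
    apply Finset.sum_nbij' (fun i => n - i) (fun j => n - j)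
    · intro i hi; obtain ⟨h1, h2⟩ := Finset.mem_Icc.1 hi; simp only [Finset.mem_range]; omega
    · intro j hj; simp only [Finset.mem_range] at hj; rw [Finset.mem_Icc]; omega
    · intro i hi; obtain ⟨h1, h2⟩ := Finset.mem_Icc.1 hi; omega
    · intro j hj; simp only [Finset.mem_range] at hj; omega
    · intro i hi; obtain ⟨h1, h2⟩ := Finset.mem_Icc.1 hi
      have he : n + 1 - i = (n - i) + 1 := by omega
      rw [he]
  rw [hre, sum_two_pow_pred]
  have hg : ∑ j ∈ Finset.range n, 2 ^ (j+1) = 2 * (2^n - 1) := by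
    simp only [pow_succ, mul_comm]
    rw [← Finset.mul_sum, sum_two_pow]
  rw [hg]
  have h1 := Nat.one_le_two_pow (n := n)
  have h2 : n + 1 ≤ 2 ^ n := Nat.lt_two_pow_self
  rw [pow_succ]
  omega

lemma nat_sInf_union_singleton {X : Set ℕ} {b x : ℕ} (hx : x ∈ X) (hxb : x ≤ b) :
    sInf (X ∪ {b}) = sInf X := by
  apply le_antisymm
  · exact Nat.sInf_le (Set.mem_union_left _ (Nat.sInf_mem ⟨x, hx⟩))
  · have hmem : sInf (X ∪ {b}) ∈ X ∪ {b} := Nat.sInf_mem ⟨x, Set.mem_union_left _ hx⟩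
    rcases hmem with h | h
    · exact Nat.sInf_le h
    · rw [Set.mem_singleton_iff] at h
      rw [h]
      exact le_trans (Nat.sInf_le hx) hxb


lemma pair_eq_sym2 {α : Type*} [DecidableEq α] {i j k l : α} (hij : i ≠ j)
    (h : ({i, j} : Finset α) = {k, l}) : s(i, j) = s(k, l) := by
  have hi : i = k ∨ i = l := by
    have : i ∈ ({k, l} : Finset α) := h ▸ (by simp)
    simpa using this
  have hj : j = k ∨ j = l := by
    have : j ∈ ({k, l} : Finset α) := h ▸ (by simp)
    simpa using this
  rw [Sym2.eq_iff]
  rcases hi with rfl | rfl <;> rcases hj with rfl | rfl <;> first | tauto | simp_all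

theorem stmt_12 (n : ℕ) (hn : 3 ≤ n) (G : SimpleGraph (Fin n)) [DecidableRel G.Adj]
    (E : Finset (Finset (Fin n ⊕ Fin 3))) (hHG : IsHG G E)
    (σ : Fin n ⊕ Fin 3 → ℕ) (hσ : IsOrdering Finset.univ σ)
    (hB : ∀ k : Fin 3, n + 1 ≤ σ (Sum.inr k)) :
    totalCost E σ < 6 * (2 ^ n - 1 - n.choose 2 + G.edgeFinset.card) := by
  classical
  rw [IsOrdering] at hσ
  simp only [Finset.coe_univ, Finset.card_univ, Fintype.card_sum, Fintype.card_fin] at hσ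
  have hinjσ : Function.Injective σ := Set.injOn_univ.mp hσ.injOn
  have hmaps : ∀ v, σ v ∈ Set.Icc 1 (n + 3) := fun v => hσ.mapsTo (Set.mem_univ v)
  set τ : Fin n → ℕ := fun i => σ (Sum.inl i) with hτdef
  -- A-vertices occupy positions 1..n
  have hτn : ∀ i, τ i ≤ n := by
    intro i
    by_contra hcon
    push_neg at hcon
    set T : Finset (Fin n ⊕ Fin 3) := {Sum.inl i, Sum.inr 0, Sum.inr 1, Sum.inr 2} with hT
    have hTcard : T.card = 4 := by
      rw [hT]
      rw [Finset.card_insert_of_notMem (by simp)]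
      rw [Finset.card_insert_of_notMem (by simp)]
      rw [Finset.card_insert_of_notMem (by simp [Fin.ext_iff])]
      simp
    have hsub : T.image σ ⊆ Finset.Icc (n+1) (n+3) := by
      intro x hx
      obtain ⟨t, ht, rfl⟩ := Finset.mem_image.1 hx
      rw [hT] at ht
      simp only [Finset.mem_insert, Finset.mem_singleton] at ht
      rw [Finset.mem_Icc]
      rcases ht with rfl | rfl | rfl | rfl
      · exact ⟨hcon, (hmaps _).2⟩
      all_goals exact ⟨hB _, (hmaps _).2⟩
    have h4 : (T.image σ).card = 4 := by
      rw [Finset.card_image_of_injective T hinjσ, hTcard]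
    have := Finset.card_le_card hsub
    rw [h4, Nat.card_Icc] at this
    omega
  have hτ1 : ∀ i, 1 ≤ τ i := fun i => (hmaps (Sum.inl i)).1
  have hτinj : Function.Injective τ := fun a b hab => Sum.inl.injEq .. ▸ (hinjσ hab)
  have himg : Finset.univ.image τ = Finset.Icc 1 n := by
    apply Finset.eq_of_subset_of_card_le
    · intro x hx
      obtain ⟨v, -, rfl⟩ := Finset.mem_image.1 hx
      rw [Finset.mem_Icc]; exact ⟨hτ1 v, hτn v⟩
    · rw [Finset.card_image_of_injective _ hτinj, Nat.card_Icc]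
      simp
  -- firstHit evaluation
  have hfh : ∀ (S : Finset (Fin n)) (k : Fin 3), S.Nonempty →
      firstHit σ (S.image Sum.inl ∪ {Sum.inr k}) = sInf (τ '' ↑S) := by
    intro S k hS
    obtain ⟨v₀, hv₀⟩ := hS
    rw [firstHit]
    have hcoe : (↑(S.image Sum.inl ∪ {Sum.inr k}) : Set (Fin n ⊕ Fin 3))
        = Sum.inl '' ↑S ∪ {Sum.inr k} := by
      push_cast
      simp
    rw [hcoe, Set.image_union, ← Set.image_comp, Set.image_singleton]
    exact nat_sInf_union_singleton ⟨v₀, hv₀, rfl⟩ (le_trans (hτn v₀) (by linarith [hB k]))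
  -- admissible sets
  set Adm : Finset (Finset (Fin n)) := univ.powerset.filter (fun S =>
    (∃ i, S = {i}) ∨ (∃ i j, G.Adj i j ∧ S = {i, j}) ∨ 3 ≤ S.card) with hAdmdef
  have memAdm : ∀ S : Finset (Fin n), S ∈ Adm ↔
      ((∃ i, S = {i}) ∨ (∃ i j, G.Adj i j ∧ S = {i, j}) ∨ 3 ≤ S.card) := by
    intro S
    rw [hAdmdef, Finset.mem_filter, Finset.mem_powerset, and_iff_right (Finset.subset_univ S)]
  have hAdm_ne : ∀ S ∈ Adm, S.Nonempty := by
    intro S hS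
    rcases (memAdm S).1 hS with ⟨i, rfl⟩ | ⟨i, j, -, rfl⟩ | h3
    · exact ⟨i, Finset.mem_singleton_self i⟩
    · exact ⟨i, Finset.mem_insert_self i _⟩
    · rw [← Finset.card_pos]; omega
  -- key finset identities
  have key1 : ∀ (i : Fin n) (k : Fin 3),
      ({i} : Finset (Fin n)).image Sum.inl ∪ {Sum.inr k} = {Sum.inl i, Sum.inr k} := by
    intro i k
    ext x; simp [or_assoc]
  have key2 : ∀ (i j : Fin n) (k : Fin 3),
      ({i, j} : Finset (Fin n)).image Sum.inl ∪ {Sum.inr k}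
        = {Sum.inl i, Sum.inl j, Sum.inr k} := by
    intro i j k
    ext x; simp [or_assoc]
  -- injectivity of the edge-building map
  have hfinj : ∀ (S₁ : Finset (Fin n)) (k₁ : Fin 3) (S₂ : Finset (Fin n)) (k₂ : Fin 3),
      S₁.image Sum.inl ∪ {Sum.inr k₁} = S₂.image Sum.inl ∪ {Sum.inr k₂} →
      S₁ = S₂ ∧ k₁ = k₂ := by
    intro S₁ k₁ S₂ k₂ h
    constructor
    · ext i
      have := Finset.ext_iff.1 h (Sum.inl i)
      simp only [Finset.mem_union, Finset.mem_image, Finset.mem_singleton] at this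
      constructor
      · intro hi
        rcases this.1 (Or.inl ⟨i, hi, rfl⟩) with ⟨x, hx, hxe⟩ | habs
        · rwa [← Sum.inl_injective hxe]
        · exact absurd habs (by simp)
      · intro hi
        rcases this.2 (Or.inl ⟨i, hi, rfl⟩) with ⟨x, hx, hxe⟩ | habs
        · rwa [← Sum.inl_injective hxe]
        · exact absurd habs (by simp)
    · have := Finset.ext_iff.1 h (Sum.inr k₁)
      rcases Finset.mem_union.1 (this.1 (Finset.mem_union_right _ (Finset.mem_singleton_self _))) with h' | h'
      · obtain ⟨x, -, hxe⟩ := Finset.mem_image.1 h'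
        exact absurd hxe (by simp)
      · exact Sum.inr_injective (Finset.mem_singleton.1 h')
  -- E as an image
  have hE : E = (Adm ×ˢ (univ : Finset (Fin 3))).image
      (fun p : Finset (Fin n) × Fin 3 => p.1.image Sum.inl ∪ {Sum.inr p.2}) := by
    ext e
    rw [hHG e]
    constructor
    · rintro (⟨i, k, rfl⟩ | ⟨i, j, k, hadj, rfl⟩ | ⟨X, hX, k, rfl⟩)
      · exact Finset.mem_image.2 ⟨({i}, k),
          Finset.mem_product.2 ⟨(memAdm _).2 (Or.inl ⟨i, rfl⟩), Finset.mem_univ _⟩, key1 i k⟩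
      · exact Finset.mem_image.2 ⟨({i, j}, k),
          Finset.mem_product.2 ⟨(memAdm _).2 (Or.inr (Or.inl ⟨i, j, hadj, rfl⟩)),
            Finset.mem_univ _⟩, key2 i j k⟩
      · exact Finset.mem_image.2 ⟨(X, k),
          Finset.mem_product.2 ⟨(memAdm _).2 (Or.inr (Or.inr hX)), Finset.mem_univ _⟩, rfl⟩
    · intro he
      obtain ⟨⟨S, k⟩, hp, rfl⟩ := Finset.mem_image.1 he
      have hS := (Finset.mem_product.1 hp).1
      rcases (memAdm S).1 hS with ⟨i, rfl⟩ | ⟨i, j, hadj, rfl⟩ | h3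
      · exact Or.inl ⟨i, k, key1 i k⟩
      · exact Or.inr (Or.inl ⟨i, j, k, hadj, key2 i j k⟩)
      · exact Or.inr (Or.inr ⟨S, h3, k, rfl⟩)
  -- rewrite total cost
  have hcost : totalCost E σ = 3 * ∑ S ∈ Adm, sInf (τ '' ↑S) := by
    rw [totalCost, hE, Finset.sum_image]
    · rw [Finset.sum_product]
      rw [Finset.mul_sum]
      apply Finset.sum_congr rfl
      intro S hS
      have hne := hAdm_ne S hS
      calc ∑ k : Fin 3, firstHit σ (S.image Sum.inl ∪ {Sum.inr k})
          = ∑ _k : Fin 3, sInf (τ '' ↑S) :=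
            Finset.sum_congr rfl (fun k _ => hfh S k hne)
        _ = 3 * sInf (τ '' ↑S) := by
            rw [Finset.sum_const, Finset.card_univ, Fintype.card_fin, smul_eq_mul]
    · intro p hp q hq heq
      obtain ⟨h1, h2⟩ := hfinj p.1 p.2 q.1 q.2 heq
      exact Prod.ext h1 h2
  -- the non-edge pairs
  set NE2 : Finset (Finset (Fin n)) := (univ.powersetCard 2).filter
    (fun S => ¬ ∃ i j, G.Adj i j ∧ S = {i, j}) with hNE2def
  have memNE2 : ∀ S : Finset (Fin n), S ∈ NE2 ↔
      (S.card = 2 ∧ ¬ ∃ i j, G.Adj i j ∧ S = {i, j}) := by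
    intro S
    rw [hNE2def, Finset.mem_filter, Finset.mem_powersetCard_univ]
  -- partition of the nonempty sets
  have hsplit : univ.powerset.filter (fun S : Finset (Fin n) => S.Nonempty) = Adm ∪ NE2 := by
    ext S
    rw [Finset.mem_filter, Finset.mem_powerset, Finset.mem_union]
    constructor
    · rintro ⟨-, hne⟩
      have hc1 : 1 ≤ S.card := Finset.card_pos.2 hne
      rcases Nat.lt_or_ge S.card 3 with h3 | h3
      · rcases Nat.lt_or_ge S.card 2 with h2 | h2
        · have : S.card = 1 := by omega
          obtain ⟨i, rfl⟩ := Finset.card_eq_one.1 this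
          exact Or.inl ((memAdm _).2 (Or.inl ⟨i, rfl⟩))
        · have hc2 : S.card = 2 := by omega
          by_cases hex : ∃ i j, G.Adj i j ∧ S = {i, j}
          · exact Or.inl ((memAdm _).2 (Or.inr (Or.inl hex)))
          · exact Or.inr ((memNE2 _).2 ⟨hc2, hex⟩)
      · exact Or.inl ((memAdm _).2 (Or.inr (Or.inr h3)))
    · rintro (h | h)
      · exact ⟨Finset.subset_univ S, hAdm_ne S h⟩
      · refine ⟨Finset.subset_univ S, ?_⟩
        rw [← Finset.card_pos, ((memNE2 _).1 h).1]
        omega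
  have hdisj : Disjoint Adm NE2 := by
    rw [Finset.disjoint_left]
    intro S ha hb
    obtain ⟨hc2, hnex⟩ := (memNE2 _).1 hb
    rcases (memAdm _).1 ha with ⟨i, rfl⟩ | hex | h3
    · simp at hc2
    · exact hnex hex
    · omega
  -- lower bound on the non-edge sum
  obtain ⟨v₁, -, hv₁⟩ : ∃ v₁ ∈ univ, τ v₁ = 1 := by
    have : (1 : ℕ) ∈ Finset.univ.image τ := by
      rw [himg, Finset.mem_Icc]; omega
    exact Finset.mem_image.1 this
  have hNE2ne : ∀ S ∈ NE2, S.Nonempty := by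
    intro S hS
    rw [← Finset.card_pos, ((memNE2 _).1 hS).1]
    omega
  have hlb : 2 * NE2.card < (∑ S ∈ NE2, sInf (τ '' ↑S)) + n := by
    have hcardsplit := Finset.card_filter_add_card_filter_not
      (s := NE2) (p := fun S => v₁ ∈ S)
    have hsumsplit := Finset.sum_filter_add_sum_filter_not NE2
      (fun S => v₁ ∈ S) (fun S => sInf (τ '' ↑S))
    have hA1 : (NE2.filter (fun S => v₁ ∈ S)).card * 1
        ≤ ∑ S ∈ NE2.filter (fun S => v₁ ∈ S), sInf (τ '' ↑S) := by
      rw [← smul_eq_mul]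
      apply Finset.card_nsmul_le_sum
      intro S hS
      exact le_mval' (hNE2ne S (Finset.mem_filter.1 hS).1) (fun v _ => hτ1 v)
    have hA2 : (NE2.filter (fun S => ¬ v₁ ∈ S)).card * 2
        ≤ ∑ S ∈ NE2.filter (fun S => ¬ v₁ ∈ S), sInf (τ '' ↑S) := by
      rw [← smul_eq_mul]
      apply Finset.card_nsmul_le_sum
      intro S hS
      obtain ⟨hS1, hS2⟩ := Finset.mem_filter.1 hS
      apply le_mval' (hNE2ne S hS1)
      intro v hv
      have hne1 : τ v ≠ 1 := by
        intro heq
        exact hS2 (hτinj (heq.trans hv₁.symm) ▸ hv)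
      have := hτ1 v
      omega
    have hA1card : (NE2.filter (fun S => v₁ ∈ S)).card ≤ n - 1 := by
      have hsub : NE2.filter (fun S => v₁ ∈ S)
          ⊆ (Finset.univ.erase v₁).image (fun u => insert v₁ {u}) := by
        intro S hS
        obtain ⟨hS1, hmem⟩ := Finset.mem_filter.1 hS
        obtain ⟨x, y, hxy, rfl⟩ := Finset.card_eq_two.1 ((memNE2 _).1 hS1).1
        rcases Finset.mem_insert.1 hmem with rfl | hy
        · refine Finset.mem_image.2 ⟨y, Finset.mem_erase.2 ⟨fun h => hxy h.symm, Finset.mem_univ _⟩, rfl⟩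
        · rw [Finset.mem_singleton] at hy
          subst hy
          refine Finset.mem_image.2 ⟨x, Finset.mem_erase.2 ⟨fun h => hxy h, Finset.mem_univ _⟩, ?_⟩
          rw [Finset.pair_comm]
      calc (NE2.filter (fun S => v₁ ∈ S)).card
          ≤ ((Finset.univ.erase v₁).image (fun u => insert v₁ {u})).card :=
            Finset.card_le_card hsub
        _ ≤ (Finset.univ.erase v₁).card := Finset.card_image_le
        _ = n - 1 := by
            rw [Finset.card_erase_of_mem (Finset.mem_univ _), Finset.card_univ,
              Fintype.card_fin]
    omega
  -- counting: non-edges + edges = C(n,2)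
  have hcount : G.edgeFinset.card + NE2.card = n.choose 2 := by
    have hpairs : ((univ : Finset (Fin n)).powersetCard 2).card = n.choose 2 := by
      rw [Finset.card_powersetCard, Finset.card_univ, Fintype.card_fin]
    have hsplit2 := Finset.card_filter_add_card_filter_not
      (s := (univ : Finset (Fin n)).powersetCard 2)
      (p := fun S => ∃ i j, G.Adj i j ∧ S = {i, j})
    set f : Sym2 (Fin n) → Finset (Fin n) :=
      Sym2.lift ⟨fun i j => ({i, j} : Finset (Fin n)),
        fun i j => Finset.pair_comm i j⟩ with hfdef
    have hedge : ((univ : Finset (Fin n)).powersetCard 2).filter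
        (fun S => ∃ i j, G.Adj i j ∧ S = {i, j}) = G.edgeFinset.image f := by
      ext S
      constructor
      · intro hS
        obtain ⟨-, i, j, hadj, rfl⟩ := Finset.mem_filter.1 hS
        exact Finset.mem_image.2 ⟨s(i, j),
          SimpleGraph.mem_edgeFinset.2 (G.mem_edgeSet.2 hadj), rfl⟩
      · intro hS
        obtain ⟨e, he, rfl⟩ := Finset.mem_image.1 hS
        induction e using Sym2.ind with
        | _ i j =>
          have hadj : G.Adj i j := G.mem_edgeSet.1 (SimpleGraph.mem_edgeFinset.1 he)
          refine Finset.mem_filter.2 ⟨Finset.mem_powersetCard_univ.2 ?_, ⟨i, j, hadj, rfl⟩⟩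
          rw [show f s(i, j) = {i, j} from rfl, Finset.card_insert_of_notMem
            (Finset.notMem_singleton.2 hadj.ne), Finset.card_singleton]
    have hinjf : Set.InjOn f ↑G.edgeFinset := by
      intro e₁ h₁ e₂ h₂ heq
      rw [Finset.mem_coe] at h₁ h₂
      induction e₁ using Sym2.ind with
      | _ i j =>
        induction e₂ using Sym2.ind with
        | _ k l =>
          have hadj : G.Adj i j := G.mem_edgeSet.1 (SimpleGraph.mem_edgeFinset.1 h₁)
          exact pair_eq_sym2 hadj.ne heq
    rw [hedge, Finset.card_image_of_injOn hinjf] at hsplit2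
    rw [hpairs] at hsplit2
    exact hsplit2
  -- assemble
  have hTall := sum_min_powerset τ hτinj himg
  rw [hsplit, Finset.sum_union hdisj] at hTall
  have hpow : (2:ℕ) ^ (n + 1) = 2 * 2 ^ n := by rw [pow_succ]; ring
  have hub := choose_two_add_one_le n (by omega)
  omega
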